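/- arXiv:2312.07291 — 2 statements merged into one kernel-verified Lean document; each statement's English description precedes it below -/
import Mathlib

section
/- Let A be an M×M complex matrix all of whose eigenvalues have negative real part, and let τ > 0. Then the matrix 2A − τ·1 is invertible (where 1 is the identity matrix), and the matrix Laguerre coefficients S_{n,τ,0,A} = ∫₀^∞ exp(tA) · l_{n,τ}(t) dt satisfy the recursion S_{0,τ,0,A} = −2√τ · (2A − τ·1)⁻¹ and S_{n+1,τ,0,A} = (2A + τ·1)·(2A − τ·1)⁻¹ · S_{n,τ,0,A} for all n ∈ ℕ. -/
open MeasureTheory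

/-- The (ordinary) Laguerre polynomial `L_n(t) = ∑_{k=0}^n (-1)^k (n!/((k!)²(n-k)!)) t^k`. -/
noncomputable def ordLagPoly (n : ℕ) (t : ℝ) : ℝ :=
  ∑ k ∈ Finset.range (n + 1),
    (-1 : ℝ) ^ k * ((n.factorial : ℝ) / ((k.factorial : ℝ) ^ 2 * (n - k).factorial)) * t ^ k

/-- The Laguerre function `l_{n,τ}(t) = √τ e^{-τt/2} L_n(τt)`. -/
noncomputable def ordLagFun (τ : ℝ) (n : ℕ) (t : ℝ) : ℝ :=
  Real.sqrt τ * Real.exp (-τ * t / 2) * ordLagPoly n (τ * t)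

/-- The Laguerre coefficient `s_{n,τ,0,λ} = ∫₀^∞ e^{λ t} l_{n,τ}(t) dt`. -/
noncomputable def ordLagCoef (τ : ℝ) (n : ℕ) (z : ℂ) : ℂ :=
  ∫ t in Set.Ioi (0 : ℝ), Complex.exp (z * t) * (ordLagFun τ n t : ℂ)

/-- The matrix Laguerre coefficient `S_{n,τ,0,A} = ∫₀^∞ exp(tA) l_{n,τ}(t) dt`
(entrywise integral). -/
noncomputable def matOrdLagCoef (τ : ℝ) (n : ℕ) {M : ℕ} (A : Matrix (Fin M) (Fin M) ℂ) :
    Matrix (Fin M) (Fin M) ℂ :=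
  Matrix.of fun i j =>
    ∫ t in Set.Ioi (0 : ℝ), (NormedSpace.exp ((t : ℂ) • A)) i j * (ordLagFun τ n t : ℂ)

open Filter Topology

/-- formal derivative of the Laguerre polynomial -/
noncomputable def lagD (n : ℕ) (x : ℝ) : ℝ :=
  ∑ k ∈ Finset.range (n + 1),
    (-1 : ℝ) ^ k * ((n.factorial : ℝ) / ((k.factorial : ℝ) ^ 2 * (n - k).factorial)) *
      ((k : ℝ) * x ^ (k - 1))

lemma hasDerivAt_ordLagPoly (n : ℕ) (x : ℝ) : HasDerivAt (ordLagPoly n) (lagD n x) x := by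
  have h : ∀ k ∈ Finset.range (n + 1),
      HasDerivAt (fun y : ℝ =>
        (-1 : ℝ) ^ k * ((n.factorial : ℝ) / ((k.factorial : ℝ) ^ 2 * (n - k).factorial)) * y ^ k)
        ((-1 : ℝ) ^ k * ((n.factorial : ℝ) / ((k.factorial : ℝ) ^ 2 * (n - k).factorial)) *
          ((k : ℝ) * x ^ (k - 1))) x := by
    intro k _
    exact (hasDerivAt_pow k x).const_mul _
  exact HasDerivAt.fun_sum h

lemma continuous_ordLagPoly (n : ℕ) : Continuous (ordLagPoly n) := by
  unfold ordLagPoly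
  exact continuous_finset_sum _ fun k _ => (continuous_const.mul (continuous_pow k))

lemma continuous_ordLagFun (τ : ℝ) (n : ℕ) : Continuous (ordLagFun τ n) := by
  unfold ordLagFun
  exact (continuous_const.mul (Real.continuous_exp.comp (by fun_prop))).mul
    ((continuous_ordLagPoly n).comp (by fun_prop))

lemma ordLagPoly_zero_eval (n : ℕ) : ordLagPoly n 0 = 1 := by
  unfold ordLagPoly
  rw [Finset.sum_eq_single 0]
  · simp [div_self (Nat.cast_ne_zero.mpr (Nat.factorial_ne_zero n) : (n.factorial:ℝ) ≠ 0)]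
  · intro k hk hk0
    simp [zero_pow hk0]
  · intro h
    simp at h

lemma ordLagFun_zero_eval (τ : ℝ) (n : ℕ) : ordLagFun τ n 0 = Real.sqrt τ := by
  simp [ordLagFun, ordLagPoly_zero_eval]

lemma lagD_zero (x : ℝ) : lagD 0 x = 0 := by
  simp [lagD]

/-- the key combinatorial identity `L_{n+1}' = L_n' - L_n` -/
lemma lagD_succ (n : ℕ) (x : ℝ) : lagD (n + 1) x = lagD n x - ordLagPoly n x := by
  have fact_ne : ∀ m : ℕ, ((m.factorial : ℝ)) ≠ 0 := fun m =>
    Nat.cast_ne_zero.mpr (Nat.factorial_ne_zero m)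
  -- reindex both lagD sums to drop the vanishing k = 0 term
  have expand : ∀ (m : ℕ) (c : ℕ → ℝ),
      (∑ k ∈ Finset.range (m + 1), c k * ((k : ℝ) * x ^ (k - 1)))
        = ∑ j ∈ Finset.range m, c (j + 1) * (((j : ℝ) + 1) * x ^ j) := by
    intro m c
    rw [Finset.sum_range_succ']
    simp [Nat.cast_add]
  unfold lagD ordLagPoly
  rw [expand (n + 1), expand n]
  rw [Finset.sum_range_succ (fun j => (-1 : ℝ) ^ (j + 1) *
      ((n + 1).factorial / (((j+1).factorial : ℝ) ^ 2 * ((n+1) - (j+1)).factorial)) *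
      (((j : ℝ) + 1) * x ^ j)) n]
  rw [Finset.sum_range_succ (fun k => (-1 : ℝ) ^ k *
      ((n.factorial : ℝ) / ((k.factorial : ℝ) ^ 2 * (n - k).factorial)) * x ^ k) n]
  have hmain : ∀ j ∈ Finset.range n,
      (-1 : ℝ) ^ (j + 1) *
        ((n + 1).factorial / (((j+1).factorial : ℝ) ^ 2 * ((n+1) - (j+1)).factorial)) *
        (((j : ℝ) + 1) * x ^ j)
      = (-1 : ℝ) ^ (j + 1) *
          ((n.factorial : ℝ) / (((j+1).factorial : ℝ) ^ 2 * (n - (j+1)).factorial)) *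
          (((j : ℝ) + 1) * x ^ j)
        - (-1 : ℝ) ^ j *
          ((n.factorial : ℝ) / ((j.factorial : ℝ) ^ 2 * (n - j).factorial)) * x ^ j := by
    intro j hj
    rw [Finset.mem_range] at hj
    obtain ⟨m, rfl⟩ : ∃ m, n = j + m + 1 := by
      obtain ⟨m, hm⟩ := Nat.exists_eq_add_of_lt hj
      exact ⟨m, hm⟩
    have h1 : j + m + 1 - j = m + 1 := by omega
    have h2 : j + m + 1 + 1 - (j + 1) = m + 1 := by omega
    have h3 : j + m + 1 - (j + 1) = m := by omega
    rw [h1, h2, h3]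
    have hf1 : ((j + m + 1 + 1).factorial : ℝ) = (j + m + 2) * (j + m + 1).factorial := by
      have : (j + m + 1 + 1).factorial = (j + m + 1 + 1) * (j + m + 1).factorial :=
        Nat.factorial_succ _
      rw [this]; push_cast; ring
    have hf2 : (((j + 1).factorial : ℝ)) = (j + 1) * j.factorial := by
      have : (j + 1).factorial = (j + 1) * j.factorial := Nat.factorial_succ _
      rw [this]; push_cast; ring
    have hf3 : (((m + 1).factorial : ℝ)) = (m + 1) * m.factorial := by
      have : (m + 1).factorial = (m + 1) * m.factorial := Nat.factorial_succ _
      rw [this]; push_cast; ring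
    rw [hf1, hf2, hf3, pow_succ]
    field_simp
    ring
  rw [Finset.sum_congr rfl hmain]
  have hlast : (-1 : ℝ) ^ (n + 1) *
      ((n + 1).factorial / (((n+1).factorial : ℝ) ^ 2 * ((n+1) - (n+1)).factorial)) *
      (((n : ℝ) + 1) * x ^ n)
      = -((-1 : ℝ) ^ n *
          ((n.factorial : ℝ) / ((n.factorial : ℝ) ^ 2 * (n - n).factorial)) * x ^ n) := by
    have hf2 : (((n + 1).factorial : ℝ)) = (n + 1) * n.factorial := by
      have : (n + 1).factorial = (n + 1) * n.factorial := Nat.factorial_succ _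
      rw [this]; push_cast; ring
    rw [Nat.sub_self, Nat.sub_self, hf2, pow_succ]
    field_simp
  rw [Finset.sum_sub_distrib, hlast]
  ring

section LagAnalysis

open Filter

variable (τ : ℝ)

/-- derivative of the Laguerre function -/
noncomputable def lagFunD (n : ℕ) (t : ℝ) : ℝ :=
  Real.sqrt τ * Real.exp (-τ * t / 2) *
    (-(τ / 2) * ordLagPoly n (τ * t) + τ * lagD n (τ * t))

lemma hasDerivAt_ordLagFun (n : ℕ) (t : ℝ) :
    HasDerivAt (ordLagFun τ n) (lagFunD τ n t) t := by
  have h1 : HasDerivAt (fun t : ℝ => Real.exp (-τ * t / 2))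
      (-τ / 2 * Real.exp (-τ * t / 2)) t := by
    have hlin : HasDerivAt (fun t : ℝ => -τ * t / 2) (-τ / 2) t := by
      simpa using ((hasDerivAt_id t).const_mul (-τ)).div_const 2
    simpa [mul_comm] using hlin.exp
  have h2 : HasDerivAt (fun t : ℝ => ordLagPoly n (τ * t)) (lagD n (τ * t) * τ) t := by
    have hlin : HasDerivAt (fun t : ℝ => τ * t) τ t := by
      simpa using (hasDerivAt_id t).const_mul τ
    exact (hasDerivAt_ordLagPoly n (τ * t)).comp t hlin
  have h3 := (h1.mul h2).const_mul (Real.sqrt τ)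
  have heq : ordLagFun τ n
      = fun t => Real.sqrt τ * (Real.exp (-τ * t / 2) * ordLagPoly n (τ * t)) := by
    funext s; rw [ordLagFun]; ring
  rw [heq]
  refine h3.congr_deriv ?_
  rw [lagFunD]; ring

lemma lagFunD_zero_fun (t : ℝ) : lagFunD τ 0 t = -(τ / 2) * ordLagFun τ 0 t := by
  simp only [lagFunD, ordLagFun, lagD_zero]
  ring

lemma lagFunD_succ_sub (n : ℕ) (t : ℝ) :
    lagFunD τ (n + 1) t - lagFunD τ n t
      = -(τ / 2) * (ordLagFun τ (n + 1) t + ordLagFun τ n t) := by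
  simp only [lagFunD, ordLagFun, lagD_succ]
  ring

lemma continuous_lagFunD (n : ℕ) : Continuous (lagFunD τ n) := by
  unfold lagFunD
  apply Continuous.mul
  · exact continuous_const.mul (Real.continuous_exp.comp (by fun_prop))
  · apply Continuous.add
    · exact continuous_const.mul ((continuous_ordLagPoly n).comp (by fun_prop))
    · apply continuous_const.mul
      have hld : Continuous (lagD n) := by
        unfold lagD
        exact continuous_finset_sum _ fun k _ =>
          continuous_const.mul (continuous_const.mul (continuous_pow (k - 1)))
      exact hld.comp (by fun_prop : Continuous fun t : ℝ => τ * t)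

-- decay estimates
lemma tendsto_exp_poly (hτ : 0 < τ) (k : ℕ) :
    Tendsto (fun t : ℝ => Real.exp (-(τ / 4) * t) * (τ * t) ^ k) atTop (nhds 0) := by
  have hbase : Tendsto (fun x : ℝ => x ^ k * Real.exp (-x)) atTop (nhds 0) :=
    Real.tendsto_pow_mul_exp_neg_atTop_nhds_zero k
  have hscale : Tendsto (fun t : ℝ => τ / 4 * t) atTop atTop :=
    Tendsto.const_mul_atTop (by positivity) tendsto_id
  have hcomp := hbase.comp hscale
  have h4 := hcomp.const_mul ((4 : ℝ) ^ k)
  rw [mul_zero] at h4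
  refine h4.congr fun t => ?_
  simp only [Function.comp]
  have hx : (τ * t) ^ k = 4 ^ k * (τ / 4 * t) ^ k := by
    rw [← mul_pow]; congr 1; ring
  rw [hx, show -(τ / 4) * t = -(τ / 4 * t) by ring]
  ring

lemma tendsto_exp_comb (hτ : 0 < τ) (m : ℕ) (a : ℕ → ℝ) (e : ℕ → ℕ) :
    Tendsto (fun t : ℝ => Real.exp (-(τ / 4) * t) *
      ∑ k ∈ Finset.range m, a k * (τ * t) ^ (e k)) atTop (nhds 0) := by
  have h : ∀ k ∈ Finset.range m, Tendsto
      (fun t : ℝ => a k * (Real.exp (-(τ / 4) * t) * (τ * t) ^ (e k))) atTop (nhds 0) := by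
    intro k _
    simpa using (tendsto_exp_poly τ hτ (e k)).const_mul (a k)
  have hs := tendsto_finset_sum (Finset.range m) h
  rw [Finset.sum_const_zero] at hs
  refine hs.congr fun t => ?_
  rw [Finset.mul_sum]
  exact Finset.sum_congr rfl fun k _ => by ring

lemma tendsto_exp_ordLagPoly (hτ : 0 < τ) (n : ℕ) :
    Tendsto (fun t : ℝ => Real.exp (-(τ / 4) * t) * ordLagPoly n (τ * t)) atTop (nhds 0) := by
  refine (tendsto_exp_comb τ hτ (n + 1)
    (fun k => (-1 : ℝ) ^ k * ((n.factorial : ℝ) / ((k.factorial : ℝ) ^ 2 * (n - k).factorial)))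
    (fun k => k)).congr fun t => ?_
  rw [ordLagPoly]

lemma tendsto_exp_lagD (hτ : 0 < τ) (n : ℕ) :
    Tendsto (fun t : ℝ => Real.exp (-(τ / 4) * t) * lagD n (τ * t)) atTop (nhds 0) := by
  refine (tendsto_exp_comb τ hτ (n + 1)
    (fun k => (-1 : ℝ) ^ k * ((n.factorial : ℝ) / ((k.factorial : ℝ) ^ 2 * (n - k).factorial)) * k)
    (fun k => k - 1)).congr fun t => ?_
  rw [lagD]
  congr 1
  exact Finset.sum_congr rfl fun k _ => by ring

lemma exp_collapse (t : ℝ) : Real.exp (τ / 4 * t) * Real.exp (-τ * t / 2)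
    = Real.exp (-(τ / 4) * t) := by
  rw [← Real.exp_add]; congr 1; ring

lemma decay_aux (c : ℝ → ℝ) (hc : Continuous c)
    (hlim : Tendsto (fun t => Real.exp (τ / 4 * t) * c t) atTop (nhds 0)) :
    ∃ D, 0 ≤ D ∧ ∀ t ≥ 0, |c t| ≤ D * Real.exp (-(τ / 4) * t) := by
  have hφc : Continuous (fun t => Real.exp (τ / 4 * t) * c t) :=
    (Real.continuous_exp.comp (by fun_prop)).mul hc
  have hev : ∀ᶠ t in atTop, |Real.exp (τ / 4 * t) * c t| ≤ 1 := by
    have h := hlim.eventually (Metric.ball_mem_nhds (0 : ℝ) one_pos)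
    filter_upwards [h] with t ht
    rw [Real.dist_eq, sub_zero] at ht
    exact ht.le
  obtain ⟨X, hX⟩ := eventually_atTop.mp hev
  obtain ⟨C, hC⟩ := (isCompact_Icc (a := (0:ℝ)) (b := max X 0)).exists_bound_of_continuousOn
    hφc.continuousOn
  refine ⟨max C 1, le_trans zero_le_one (le_max_right _ _), fun t ht => ?_⟩
  have hbound : |Real.exp (τ / 4 * t) * c t| ≤ max C 1 := by
    rcases le_total t (max X 0) with h | h
    · exact le_trans (hC t ⟨ht, h⟩) (le_max_left _ _)
    · exact le_trans (hX t (le_trans (le_max_left _ _) h)) (le_max_right _ _)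
  have hct : c t = (Real.exp (τ / 4 * t) * c t) * Real.exp (-(τ / 4) * t) := by
    rw [mul_comm (Real.exp (τ / 4 * t)) (c t), mul_assoc, ← Real.exp_add,
      show τ / 4 * t + -(τ / 4) * t = 0 by ring, Real.exp_zero, mul_one]
  rw [hct, abs_mul, abs_of_pos (Real.exp_pos _)]
  exact mul_le_mul_of_nonneg_right hbound (Real.exp_pos _).le

lemma ordLagFun_decay (hτ : 0 < τ) (n : ℕ) :
    ∃ D, 0 ≤ D ∧ ∀ t ≥ 0, |ordLagFun τ n t| ≤ D * Real.exp (-(τ / 4) * t) := by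
  refine decay_aux τ _ (continuous_ordLagFun τ n) ?_
  have h := (tendsto_exp_ordLagPoly τ hτ n).const_mul (Real.sqrt τ)
  rw [mul_zero] at h
  refine h.congr fun t => ?_
  rw [ordLagFun, ← exp_collapse τ t]
  ring

lemma lagFunD_decay (hτ : 0 < τ) (n : ℕ) :
    ∃ D, 0 ≤ D ∧ ∀ t ≥ 0, |lagFunD τ n t| ≤ D * Real.exp (-(τ / 4) * t) := by
  refine decay_aux τ _ (continuous_lagFunD τ n) ?_
  have h := ((((tendsto_exp_ordLagPoly τ hτ n).const_mul (-(τ/2))).add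
    ((tendsto_exp_lagD τ hτ n).const_mul τ)).const_mul (Real.sqrt τ))
  simp only [mul_zero, add_zero] at h
  refine h.congr fun t => ?_
  rw [lagFunD, ← exp_collapse τ t]
  ring

end LagAnalysis

section ODE

open intervalIntegral

lemma ode_bound {E : Type*} [NormedAddCommGroup E] [NormedSpace ℂ E] [CompleteSpace E]
    (μ : ℂ) (hμ : μ.re < 0) (F G : ℝ → E) (hG : Continuous G)
    (hF : ∀ t, HasDerivAt F (μ • F t + G t) t) (C : ℝ) (hC0 : 0 ≤ C)
    (hC : ∀ t ≥ 0, ‖G t‖ ≤ C) :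
    ∀ t ≥ 0, ‖F t‖ ≤ ‖F 0‖ + C / (-μ.re) := by
  set a : ℝ := -μ.re with ha
  have ha0 : 0 < a := by simpa [ha] using hμ
  -- the auxiliary integrand
  set u : ℝ → E := fun s => Complex.exp (-μ * s) • G s with hu
  have hu_cont : Continuous u := by
    apply Continuous.smul _ hG
    exact Complex.continuous_exp.comp (by fun_prop)
  have hexp : ∀ t : ℝ, HasDerivAt (fun s : ℝ => Complex.exp (-μ * s))
      (-μ * Complex.exp (-μ * t)) t := by
    intro t
    have h1 : HasDerivAt (fun s : ℝ => -μ * (s : ℂ)) (-μ) t := by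
      simpa using (Complex.ofRealCLM.hasDerivAt (x := t)).const_mul (-μ)
    simpa [mul_comm] using h1.cexp
  have hint : ∀ t : ℝ, HasDerivAt (fun r => ∫ s in (0:ℝ)..r, u s) (u t) t := by
    intro t
    exact intervalIntegral.integral_hasDerivAt_right (hu_cont.intervalIntegrable 0 t)
      hu_cont.aestronglyMeasurable.stronglyMeasurableAtFilter
      hu_cont.continuousAt
  set H : ℝ → E := fun t => Complex.exp (-μ * t) • F t - ∫ s in (0:ℝ)..t, u s with hH
  have hHd : ∀ t, HasDerivAt H 0 t := by
    intro t
    have h := ((hexp t).smul (hF t)).sub (hint t)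
    refine h.congr_deriv ?_
    rw [hu]
    simp only [smul_add, smul_smul]
    rw [show Complex.exp (-μ * t) * μ = -(-μ * Complex.exp (-μ * t)) by ring]
    module
  have hHconst : ∀ t, H t = H 0 :=
    fun t => is_const_of_deriv_eq_zero (fun s => (hHd s).differentiableAt)
      (fun s => (hHd s).deriv) t 0
  have hH0 : H 0 = F 0 := by
    simp [hH]
  -- solve for F t
  intro t ht
  have hsolve : F t = Complex.exp (μ * t) • (F 0 + ∫ s in (0:ℝ)..t, u s) := by
    have h1 : Complex.exp (-μ * t) • F t = F 0 + ∫ s in (0:ℝ)..t, u s := by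
      have := hHconst t
      rw [hH0] at this
      simp only [hH] at this
      rw [sub_eq_iff_eq_add] at this
      exact this
    calc F t = Complex.exp (μ * t) • Complex.exp (-μ * t) • F t := by
            rw [smul_smul, ← Complex.exp_add, show μ * t + -μ * t = 0 by ring,
              Complex.exp_zero, one_smul]
      _ = Complex.exp (μ * t) • (F 0 + ∫ s in (0:ℝ)..t, u s) := by rw [h1]
  -- norm estimates
  have hnorm_exp : ∀ z : ℂ, ‖Complex.exp z‖ = Real.exp z.re := fun z => Complex.norm_exp z
  have hre : ∀ s : ℝ, (μ * s).re = μ.re * s := by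
    intro s; simp [Complex.mul_re]
  have hre' : ∀ s : ℝ, (-μ * s).re = a * s := by
    intro s; simp [Complex.mul_re, ha]
  -- bound the integral
  have hbound_u : ∀ s ∈ Set.Icc (0:ℝ) t, ‖u s‖ ≤ C * Real.exp (a * s) := by
    intro s hs
    rw [hu]
    simp only [norm_smul, hnorm_exp, hre']
    rw [mul_comm]
    exact mul_le_mul_of_nonneg_right (hC s hs.1) (Real.exp_pos _).le
  have hce : Continuous (fun s : ℝ => C * Real.exp (a * s)) :=
    continuous_const.mul (Real.continuous_exp.comp (by fun_prop))
  have hIex : ∫ s in (0:ℝ)..t, C * Real.exp (a * s)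
      = C * ((Real.exp (a * t) - 1) / a) := by
    have hder : ∀ s ∈ Set.uIcc (0:ℝ) t, HasDerivAt (fun r => C * (Real.exp (a * r) / a))
        (C * Real.exp (a * s)) s := by
      intro s _
      have h1 : HasDerivAt (fun r : ℝ => a * r) a s := by
        simpa using (hasDerivAt_id s).const_mul a
      have h2 := (h1.exp.div_const a).const_mul C
      refine h2.congr_deriv ?_
      rw [mul_div_assoc, div_self ha0.ne', mul_one]
    rw [intervalIntegral.integral_eq_sub_of_hasDerivAt hder (hce.intervalIntegrable 0 t)]
    rw [mul_zero, Real.exp_zero]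
    ring
  have hInorm : ‖∫ s in (0:ℝ)..t, u s‖ ≤ C * ((Real.exp (a * t) - 1) / a) := by
    rw [← hIex]
    have h1 : ‖∫ s in (0:ℝ)..t, u s‖ ≤ ∫ s in (0:ℝ)..t, ‖u s‖ :=
      intervalIntegral.norm_integral_le_integral_norm ht
    refine le_trans h1 ?_
    apply intervalIntegral.integral_mono_on ht
      (hu_cont.norm.intervalIntegrable 0 t)
      (hce.intervalIntegrable 0 t)
    exact hbound_u
  -- final bound
  rw [hsolve, norm_smul, hnorm_exp, hre]
  have hFn : ‖F 0 + ∫ s in (0:ℝ)..t, u s‖ ≤ ‖F 0‖ + C * ((Real.exp (a * t) - 1) / a) :=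
    le_trans (norm_add_le _ _) (by linarith)
  have hexp_le : Real.exp (μ.re * t) ≤ 1 := by
    rw [Real.exp_le_one_iff]
    nlinarith
  have hexp_pos : (0:ℝ) < Real.exp (μ.re * t) := Real.exp_pos _
  have hmul : Real.exp (μ.re * t) * Real.exp (a * t) = 1 := by
    rw [← Real.exp_add, show μ.re * t + a * t = 0 by rw [ha]; ring, Real.exp_zero]
  have hstep := mul_le_mul_of_nonneg_left hFn hexp_pos.le
  refine le_trans hstep ?_
  have hexpand : Real.exp (μ.re * t) * (‖F 0‖ + C * ((Real.exp (a * t) - 1) / a))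
      = Real.exp (μ.re * t) * ‖F 0‖ + (C / a) * (1 - Real.exp (μ.re * t)) := by
    field_simp
    rw [mul_comm t a]; linear_combination C * hmul
  rw [hexpand]
  have h1 : Real.exp (μ.re * t) * ‖F 0‖ ≤ ‖F 0‖ :=
    mul_le_of_le_one_left (norm_nonneg _) hexp_le
  have h2 : (C / a) * (1 - Real.exp (μ.re * t)) ≤ C / a := by
    apply mul_le_of_le_one_right (by positivity)
    nlinarith
  calc Real.exp (μ.re * t) * ‖F 0‖ + (C / a) * (1 - Real.exp (μ.re * t))
      ≤ ‖F 0‖ + C / a := by linarith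
    _ = ‖F 0‖ + C / (-μ.re) := by rw [ha]

end ODE

section MatrixInfra

open Polynomial

variable {M : ℕ}

lemma smul_one_eq_scalar (μ : ℂ) :
    μ • (1 : Matrix (Fin M) (Fin M) ℂ) = Matrix.scalar (Fin M) μ := by
  ext i j
  by_cases h : i = j <;>
    simp [h, Matrix.scalar_apply, Matrix.one_apply, Matrix.diagonal_apply]

lemma root_mem_spectrum (A : Matrix (Fin M) (Fin M) ℂ) (μ : ℂ)
    (h : μ ∈ (Matrix.charpoly A).roots) : μ ∈ spectrum ℂ A := by
  have hroot : (Matrix.charpoly A).IsRoot μ :=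
    (Polynomial.mem_roots (Matrix.charpoly_monic A).ne_zero).mp h
  have heval : (Matrix.charpoly A).eval μ = Matrix.det (Matrix.scalar (Fin M) μ - A) := by
    rw [Matrix.charpoly, eval_det, Matrix.matPolyEquiv_charmatrix]
    rw [Polynomial.eval_sub, Polynomial.eval_X, Polynomial.eval_C]
  rw [spectrum.mem_iff]
  intro hUnit
  have halg : (algebraMap ℂ (Matrix (Fin M) (Fin M) ℂ)) μ - A
      = Matrix.scalar (Fin M) μ - A := by
    rw [Algebra.algebraMap_eq_smul_one, smul_one_eq_scalar]
  rw [halg, Matrix.isUnit_iff_isUnit_det] at hUnit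
  rw [Polynomial.IsRoot.def, heval] at hroot
  rw [hroot] at hUnit
  exact (by simpa using hUnit : False)

lemma charpoly_prod_eq_zero (A : Matrix (Fin M) (Fin M) ℂ) :
    ((Matrix.charpoly A).roots.toList.map (fun μ : ℂ => A - μ • 1)).prod = 0 := by
  have hCH := Matrix.aeval_self_charpoly A
  have hsplit : Matrix.charpoly A =
      ((Matrix.charpoly A).roots.toList.map (fun a => Polynomial.X - Polynomial.C a)).prod := by
    conv_lhs => rw [(IsAlgClosed.splits _).eq_prod_roots_of_monic (Matrix.charpoly_monic A),
      ← Multiset.coe_toList (Matrix.charpoly A).roots, Multiset.map_coe, Multiset.prod_coe]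
  rw [hsplit, map_list_prod, List.map_map] at hCH
  rw [← hCH]
  congr 1
  apply List.map_congr_left
  intro μ _
  simp [Function.comp, map_sub, Polynomial.aeval_X, Polynomial.aeval_C,
    Algebra.algebraMap_eq_smul_one]

lemma commute_sub_smul_one (A : Matrix (Fin M) (Fin M) ℂ) (μ ν : ℂ) :
    Commute (A - μ • 1) (A - ν • 1) := by
  have h1 : Commute A (A - ν • (1 : Matrix (Fin M) (Fin M) ℂ)) :=
    (Commute.refl A).sub_right ((Commute.one_right A).smul_right ν)
  have h2 : Commute (μ • (1 : Matrix (Fin M) (Fin M) ℂ)) (A - ν • 1) :=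
    (((Commute.one_left A).smul_left μ).sub_right
      (((Commute.refl (1 : Matrix (Fin M) (Fin M) ℂ)).smul_left μ).smul_right ν))
  exact h1.sub_left h2

/-- entrywise derivative of `t ↦ exp(tA) Q` -/
lemma hasDerivAt_exp_entry (A Q : Matrix (Fin M) (Fin M) ℂ) (t : ℝ) (i j : Fin M) :
    HasDerivAt (fun u : ℝ => (NormedSpace.exp ((u : ℂ) • A) * Q) i j)
      ((A * NormedSpace.exp ((t : ℂ) • A) * Q) i j) t := by
  letI : SeminormedRing (Matrix (Fin M) (Fin M) ℂ) := Matrix.linftyOpSemiNormedRing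
  letI : NormedRing (Matrix (Fin M) (Fin M) ℂ) := Matrix.linftyOpNormedRing
  letI : NormedAlgebra ℝ (Matrix (Fin M) (Fin M) ℂ) := Matrix.linftyOpNormedAlgebra
  letI : NormedAlgebra ℂ (Matrix (Fin M) (Fin M) ℂ) := Matrix.linftyOpNormedAlgebra
  have hm : HasDerivAt (fun u : ℝ => NormedSpace.exp ((u : ℂ) • A))
      (A * NormedSpace.exp ((t : ℂ) • A)) t := by
    have h := hasDerivAt_exp_smul_const' (𝕂 := ℝ) A t
    simp only [← Complex.coe_smul] at h
    exact h
  have hmq := hm.mul_const Q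
  -- entry continuous linear map
  let L : Matrix (Fin M) (Fin M) ℂ →ₗ[ℝ] ℂ :=
    { toFun := fun X => X i j
      map_add' := fun X Y => rfl
      map_smul' := fun c X => rfl }
  have hL := (LinearMap.toContinuousLinearMap L).hasFDerivAt
    (x := NormedSpace.exp ((t : ℂ) • A) * Q)
  exact hL.comp_hasDerivAt t hmq

/-- entrywise continuity of `t ↦ exp(tA) Q` -/
lemma continuous_exp_entry (A Q : Matrix (Fin M) (Fin M) ℂ) (i j : Fin M) :
    Continuous (fun u : ℝ => (NormedSpace.exp ((u : ℂ) • A) * Q) i j) := by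
  exact continuous_iff_continuousAt.mpr
    fun x => (hasDerivAt_exp_entry A Q x i j).continuousAt

end MatrixInfra

section Bounded

variable {M : ℕ}

lemma exp_zero_smul (A : Matrix (Fin M) (Fin M) ℂ) :
    NormedSpace.exp (((0 : ℝ) : ℂ) • A) = 1 := by
  rw [Complex.ofReal_zero, zero_smul, NormedSpace.exp_zero]

lemma bounded_aux (A : Matrix (Fin M) (Fin M) ℂ) (l : List ℂ)
    (hl : ∀ μ ∈ l, μ.re < 0) :
    ∀ Q : Matrix (Fin M) (Fin M) ℂ,
      (l.map (fun μ : ℂ => A - μ • 1)).prod * Q = 0 →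
      ∃ C, 0 ≤ C ∧ ∀ t : ℝ, 0 ≤ t → ∀ i j,
        ‖(NormedSpace.exp ((t : ℂ) • A) * Q) i j‖ ≤ C := by
  induction l with
  | nil =>
    intro Q hQ
    rw [List.map_nil, List.prod_nil, one_mul] at hQ
    refine ⟨0, le_refl 0, fun t ht i j => ?_⟩
    rw [hQ, mul_zero]
    simp
  | cons μ l ih =>
    intro Q hQ
    have hμ : μ.re < 0 := hl μ List.mem_cons_self
    have hl' : ∀ ν ∈ l, ν.re < 0 := fun ν hν => hl ν (List.mem_cons_of_mem μ hν)
    -- commute the head factor through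
    have hcomm : Commute (A - μ • 1) ((l.map (fun ν : ℂ => A - ν • 1)).prod) := by
      apply Commute.list_prod_right
      intro x hx
      obtain ⟨ν, _, rfl⟩ := List.mem_map.mp hx
      exact commute_sub_smul_one A μ ν
    have hQ' : (l.map (fun ν : ℂ => A - ν • 1)).prod * ((A - μ • 1) * Q) = 0 := by
      rw [List.map_cons, List.prod_cons, mul_assoc] at hQ
      rw [← mul_assoc, ← hcomm.eq, mul_assoc]
      exact hQ
    obtain ⟨C, hC0, hC⟩ := ih hl' ((A - μ • 1) * Q) hQ'
    -- apply the scalar ODE bound to each entry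
    set E : ℝ → Matrix (Fin M) (Fin M) ℂ := fun t => NormedSpace.exp ((t : ℂ) • A) with hE
    have hmat : ∀ t : ℝ, A * E t * Q = μ • (E t * Q) + E t * ((A - μ • 1) * Q) := by
      intro t
      have hAE : A * E t = E t * A := by
        have hc : Commute A ((t : ℂ) • A) := (Commute.refl A).smul_right _
        exact hc.exp_right.eq
      calc A * E t * Q = E t * A * Q := by rw [hAE]
        _ = E t * (A * Q) := by rw [mul_assoc]
        _ = E t * (μ • Q + (A - μ • 1) * Q) := by
            congr 1
            rw [Matrix.sub_mul, Matrix.smul_mul, Matrix.one_mul]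
            abel
        _ = μ • (E t * Q) + E t * ((A - μ • 1) * Q) := by
            rw [Matrix.mul_add, Matrix.mul_smul]
    refine ⟨(∑ i, ∑ j, ‖Q i j‖) + C / (-μ.re),
      add_nonneg (Finset.sum_nonneg fun _ _ => Finset.sum_nonneg fun _ _ => norm_nonneg _)
        (div_nonneg hC0 (by linarith)), fun t ht i j => ?_⟩
    have hFd : ∀ s : ℝ, HasDerivAt (fun u : ℝ => (E u * Q) i j)
        (μ • ((E s * Q) i j) + (E s * ((A - μ • 1) * Q)) i j) s := by
      intro s
      have h := hasDerivAt_exp_entry A Q s i j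
      rw [show A * NormedSpace.exp ((s : ℂ) • A) * Q = A * E s * Q from rfl, hmat s] at h
      simpa [Matrix.add_apply, Matrix.smul_apply, smul_eq_mul, hE] using h
    have hGc : Continuous (fun u : ℝ => (E u * ((A - μ • 1) * Q)) i j) :=
      continuous_exp_entry A ((A - μ • 1) * Q) i j
    have hode := ode_bound μ hμ (fun u : ℝ => (E u * Q) i j)
      (fun u : ℝ => (E u * ((A - μ • 1) * Q)) i j) hGc hFd C hC0
      (fun s hs => hC s hs i j) t ht
    refine le_trans hode ?_
    have hF0 : ‖(fun u : ℝ => (E u * Q) i j) 0‖ = ‖Q i j‖ := by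
      rw [show (fun u : ℝ => (E u * Q) i j) 0 = (E 0 * Q) i j from rfl, hE]
      simp only [exp_zero_smul, Matrix.one_mul]
    rw [hF0]
    have hQij : ‖Q i j‖ ≤ ∑ i', ∑ j', ‖Q i' j'‖ := by
      refine le_trans ?_ (Finset.single_le_sum
        (f := fun i' => ∑ j', ‖Q i' j'‖)
        (fun _ _ => Finset.sum_nonneg fun _ _ => norm_nonneg _) (Finset.mem_univ i))
      exact Finset.single_le_sum (f := fun j' => ‖Q i j'‖)
        (fun _ _ => norm_nonneg _) (Finset.mem_univ j)
    have : C / (-μ.re) ≤ C / (-μ.re) := le_refl _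
    linarith

lemma exp_entry_bound (A : Matrix (Fin M) (Fin M) ℂ)
    (hA : ∀ μ ∈ spectrum ℂ A, μ.re < 0) :
    ∃ C, 0 ≤ C ∧ ∀ t : ℝ, 0 ≤ t → ∀ i j,
      ‖(NormedSpace.exp ((t : ℂ) • A)) i j‖ ≤ C := by
  obtain ⟨C, hC0, hC⟩ := bounded_aux A (Matrix.charpoly A).roots.toList
    (fun μ hμ => hA μ (root_mem_spectrum A μ (Multiset.mem_toList.mp hμ)))
    1 (by rw [mul_one]; exact charpoly_prod_eq_zero A)
  refine ⟨C, hC0, fun t ht i j => ?_⟩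
  have := hC t ht i j
  rwa [mul_one] at this
end Bounded

section Integrals

open MeasureTheory Filter

variable {M : ℕ}

lemma integrableOn_exp_entry_mul (A : Matrix (Fin M) (Fin M) ℂ)
    (C : ℝ) (hC0 : 0 ≤ C)
    (hC : ∀ t : ℝ, 0 ≤ t → ∀ i j, ‖(NormedSpace.exp ((t : ℂ) • A)) i j‖ ≤ C)
    (τ : ℝ) (hτ : 0 < τ) (ψ : ℝ → ℝ) (hψc : Continuous ψ)
    (D : ℝ) (hD : ∀ t ≥ 0, |ψ t| ≤ D * Real.exp (-(τ / 4) * t))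
    (i j : Fin M) :
    IntegrableOn (fun t : ℝ => (NormedSpace.exp ((t : ℂ) • A)) i j * (ψ t : ℂ))
      (Set.Ioi 0) := by
  have hEc : Continuous (fun t : ℝ => (NormedSpace.exp ((t : ℂ) • A)) i j) := by
    have h := continuous_exp_entry A 1 i j
    simpa [mul_one] using h
  apply Integrable.mono' (g := fun t => (C * D) * Real.exp (-(τ / 4) * t))
  · exact (exp_neg_integrableOn_Ioi 0 (by positivity : (0:ℝ) < τ / 4)).const_mul (C * D)
  · exact (hEc.mul (Complex.continuous_ofReal.comp hψc)).aestronglyMeasurable.restrict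
  · rw [ae_restrict_iff' measurableSet_Ioi]
    refine ae_of_all _ fun t ht => ?_
    have ht' : (0:ℝ) ≤ t := (Set.mem_Ioi.mp ht).le
    rw [norm_mul]
    have h1 : ‖((ψ t : ℝ) : ℂ)‖ = |ψ t| := by
      rw [Complex.norm_real, Real.norm_eq_abs]
    rw [h1]
    calc ‖(NormedSpace.exp ((t : ℂ) • A)) i j‖ * |ψ t|
        ≤ C * (D * Real.exp (-(τ / 4) * t)) :=
          mul_le_mul (hC t ht' i j) (hD t ht') (abs_nonneg _) hC0
      _ = (C * D) * Real.exp (-(τ / 4) * t) := by ring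

lemma key_matrix_eq (A : Matrix (Fin M) (Fin M) ℂ)
    (C : ℝ) (hC0 : 0 ≤ C)
    (hC : ∀ t : ℝ, 0 ≤ t → ∀ i j, ‖(NormedSpace.exp ((t : ℂ) • A)) i j‖ ≤ C)
    (τ : ℝ) (hτ : 0 < τ) (φ φd : ℝ → ℝ)
    (hderiv : ∀ t, HasDerivAt φ (φd t) t)
    (hφc : Continuous φ) (hφdc : Continuous φd)
    (Dφ : ℝ) (hDφ : ∀ t ≥ 0, |φ t| ≤ Dφ * Real.exp (-(τ / 4) * t))
    (Dd : ℝ) (hDd : ∀ t ≥ 0, |φd t| ≤ Dd * Real.exp (-(τ / 4) * t)) :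
    A * (Matrix.of fun i j =>
        ∫ t in Set.Ioi (0:ℝ), (NormedSpace.exp ((t : ℂ) • A)) i j * (φ t : ℂ))
      + (Matrix.of fun i j =>
        ∫ t in Set.Ioi (0:ℝ), (NormedSpace.exp ((t : ℂ) • A)) i j * (φd t : ℂ))
      = (-(φ 0) : ℂ) • 1 := by
  ext i j
  have hInt1 : ∀ k, IntegrableOn
      (fun t : ℝ => (NormedSpace.exp ((t:ℂ) • A)) k j * (φ t : ℂ)) (Set.Ioi 0) :=
    fun k => integrableOn_exp_entry_mul A C hC0 hC τ hτ φ hφc Dφ hDφ k j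
  have hInt2 : IntegrableOn
      (fun t : ℝ => (NormedSpace.exp ((t:ℂ) • A)) i j * (φd t : ℂ)) (Set.Ioi 0) :=
    integrableOn_exp_entry_mul A C hC0 hC τ hτ φd hφdc Dd hDd i j
  have hsum_eq : ∀ t : ℝ, (A * NormedSpace.exp ((t:ℂ) • A)) i j * (φ t : ℂ)
      = ∑ k, A i k * ((NormedSpace.exp ((t:ℂ) • A)) k j * (φ t : ℂ)) := by
    intro t
    rw [Matrix.mul_apply, Finset.sum_mul]
    exact Finset.sum_congr rfl fun k _ => by ring
  have hIntSum : IntegrableOn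
      (fun t : ℝ => ∑ k, A i k * ((NormedSpace.exp ((t:ℂ) • A)) k j * (φ t : ℂ)))
      (Set.Ioi 0) :=
    integrable_finset_sum _ fun k _ => (hInt1 k).const_mul (A i k)
  have hIntA : IntegrableOn
      (fun t : ℝ => (A * NormedSpace.exp ((t:ℂ) • A)) i j * (φ t : ℂ)) (Set.Ioi 0) := by
    exact hIntSum.congr_fun (fun t _ => (hsum_eq t).symm) measurableSet_Ioi
  have hE1 : ∀ t : ℝ, HasDerivAt (fun u : ℝ => (NormedSpace.exp ((u:ℂ) • A)) i j)
      ((A * NormedSpace.exp ((t:ℂ) • A)) i j) t := by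
    intro t
    have h := hasDerivAt_exp_entry A 1 t i j
    simpa [mul_one] using h
  have hf : ∀ t : ℝ, HasDerivAt
      (fun u : ℝ => (NormedSpace.exp ((u:ℂ) • A)) i j * (φ u : ℂ))
      ((A * NormedSpace.exp ((t:ℂ) • A)) i j * (φ t : ℂ)
        + (NormedSpace.exp ((t:ℂ) • A)) i j * (φd t : ℂ)) t :=
    fun t => (hE1 t).mul (hderiv t).ofReal_comp
  have htend : Tendsto (fun t : ℝ => (NormedSpace.exp ((t:ℂ) • A)) i j * (φ t : ℂ))
      atTop (nhds 0) := by
    have hg : Tendsto (fun t : ℝ => (C * Dφ) * Real.exp (-(τ/4) * t)) atTop (nhds 0) := by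
      have h0 := tendsto_exp_poly τ hτ 0
      simp only [pow_zero, mul_one] at h0
      simpa using h0.const_mul (C * Dφ)
    apply squeeze_zero_norm' _ hg
    filter_upwards [eventually_ge_atTop (0:ℝ)] with t ht
    rw [norm_mul, show ‖((φ t : ℝ) : ℂ)‖ = |φ t| by rw [Complex.norm_real, Real.norm_eq_abs]]
    calc ‖(NormedSpace.exp ((t:ℂ) • A)) i j‖ * |φ t|
        ≤ C * (Dφ * Real.exp (-(τ/4) * t)) :=
          mul_le_mul (hC t ht i j) (hDφ t ht) (abs_nonneg _) hC0
      _ = (C * Dφ) * Real.exp (-(τ/4) * t) := by ring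
  have hFTC := integral_Ioi_of_hasDerivAt_of_tendsto' (a := (0:ℝ)) (m := (0:ℂ))
    (fun x _ => hf x) (hIntA.add hInt2) htend
  -- assemble
  rw [Matrix.add_apply, Matrix.mul_apply]
  simp only [Matrix.of_apply]
  have step1 : ∑ k, A i k * ∫ t in Set.Ioi (0:ℝ),
        (NormedSpace.exp ((t:ℂ) • A)) k j * (φ t : ℂ)
      = ∑ k, ∫ t in Set.Ioi (0:ℝ),
        A i k * ((NormedSpace.exp ((t:ℂ) • A)) k j * (φ t : ℂ)) :=
    Finset.sum_congr rfl fun k _ => (integral_const_mul (A i k) _).symm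
  rw [step1, ← integral_finset_sum _ (fun k _ => (hInt1 k).const_mul (A i k)),
    ← integral_add hIntSum hInt2]
  have step2 : ∫ t in Set.Ioi (0:ℝ),
      ((∑ k, A i k * ((NormedSpace.exp ((t:ℂ) • A)) k j * (φ t : ℂ)))
        + (NormedSpace.exp ((t:ℂ) • A)) i j * (φd t : ℂ))
      = ∫ t in Set.Ioi (0:ℝ),
      ((A * NormedSpace.exp ((t:ℂ) • A)) i j * (φ t : ℂ)
        + (NormedSpace.exp ((t:ℂ) • A)) i j * (φd t : ℂ)) := by
    apply integral_congr_ae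
    refine ae_of_all _ fun t => ?_
    dsimp only
    rw [hsum_eq t]
  rw [step2, hFTC]
  simp only [exp_zero_smul, Matrix.smul_apply, zero_sub]
  rw [smul_eq_mul]
  ring

end Integrals

theorem matOrdLagCoef_recursion (M : ℕ) (A : Matrix (Fin M) (Fin M) ℂ)
    (hA : ∀ μ ∈ spectrum ℂ A, μ.re < 0) (τ : ℝ) (hτ : 0 < τ) :
    IsUnit ((2 : ℂ) • A - (τ : ℂ) • (1 : Matrix (Fin M) (Fin M) ℂ)) ∧
      matOrdLagCoef τ 0 A =
        (-2 * (Real.sqrt τ : ℂ)) •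
          ((2 : ℂ) • A - (τ : ℂ) • (1 : Matrix (Fin M) (Fin M) ℂ))⁻¹ ∧
      ∀ n : ℕ, matOrdLagCoef τ (n + 1) A =
        ((2 : ℂ) • A + (τ : ℂ) • (1 : Matrix (Fin M) (Fin M) ℂ)) *
          ((2 : ℂ) • A - (τ : ℂ) • (1 : Matrix (Fin M) (Fin M) ℂ))⁻¹ *
          matOrdLagCoef τ n A := by
  set X : Matrix (Fin M) (Fin M) ℂ := (2 : ℂ) • A - (τ : ℂ) • 1 with hXdef
  set Y : Matrix (Fin M) (Fin M) ℂ := (2 : ℂ) • A + (τ : ℂ) • 1 with hYdef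
  -- invertibility of X
  have hnotin : ((↑(τ/2) : ℂ)) ∉ spectrum ℂ A := by
    intro hmem
    have h := hA _ hmem
    rw [Complex.ofReal_re] at h
    linarith
  have hU0 : IsUnit ((algebraMap ℂ (Matrix (Fin M) (Fin M) ℂ)) ((τ/2 : ℝ) : ℂ) - A) :=
    spectrum.notMem_iff.mp hnotin
  have hXfact : X = ((-2 : ℂ) • (1 : Matrix (Fin M) (Fin M) ℂ)) *
      ((algebraMap ℂ (Matrix (Fin M) (Fin M) ℂ)) ((τ/2 : ℝ) : ℂ) - A) := by
    rw [Algebra.algebraMap_eq_smul_one, smul_mul_assoc, one_mul, hXdef]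
    push_cast
    module
  have hUneg2 : IsUnit ((-2 : ℂ) • (1 : Matrix (Fin M) (Fin M) ℂ)) := by
    have h := (isUnit_iff_ne_zero.mpr (by norm_num : (-2 : ℂ) ≠ 0)).map
      (algebraMap ℂ (Matrix (Fin M) (Fin M) ℂ))
    rwa [Algebra.algebraMap_eq_smul_one] at h
  have hUX : IsUnit X := by rw [hXfact]; exact hUneg2.mul hU0
  have hdetX : IsUnit X.det := (Matrix.isUnit_iff_isUnit_det X).mp hUX
  -- exp bound and integrability
  obtain ⟨C, hC0, hC⟩ := exp_entry_bound A hA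
  have hIntLag : ∀ (n : ℕ) (i j : Fin M), IntegrableOn
      (fun t : ℝ => (NormedSpace.exp ((t : ℂ) • A)) i j * (ordLagFun τ n t : ℂ))
      (Set.Ioi 0) := by
    intro n i j
    obtain ⟨D, _, hD⟩ := ordLagFun_decay τ hτ n
    exact integrableOn_exp_entry_mul A C hC0 hC τ hτ _ (continuous_ordLagFun τ n) D hD i j
  refine ⟨hUX, ?_, ?_⟩
  · -- the case n = 0
    obtain ⟨D0, hD00, hD0⟩ := ordLagFun_decay τ hτ 0
    obtain ⟨Dd, hDd0, hDd⟩ := lagFunD_decay τ hτ 0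
    have key0 := key_matrix_eq A C hC0 hC τ hτ (ordLagFun τ 0) (lagFunD τ 0)
      (fun t => hasDerivAt_ordLagFun τ 0 t) (continuous_ordLagFun τ 0)
      (continuous_lagFunD τ 0) D0 hD0 Dd hDd
    have hofd0 : (Matrix.of fun i j =>
        ∫ t in Set.Ioi (0:ℝ), (NormedSpace.exp ((t : ℂ) • A)) i j * (lagFunD τ 0 t : ℂ))
        = ((-(τ/2) : ℝ) : ℂ) • matOrdLagCoef τ 0 A := by
      ext i j
      simp only [Matrix.of_apply, matOrdLagCoef, Matrix.smul_apply, smul_eq_mul]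
      rw [← integral_const_mul]
      apply integral_congr_ae
      refine ae_of_all _ fun t => ?_
      dsimp only
      rw [lagFunD_zero_fun τ t]
      push_cast
      ring
    have key0' : A * matOrdLagCoef τ 0 A + ((-(τ/2) : ℝ) : ℂ) • matOrdLagCoef τ 0 A
        = (-(Real.sqrt τ) : ℂ) • 1 := by
      have h := key0
      rw [hofd0] at h
      rw [show (Matrix.of fun i j => ∫ t in Set.Ioi (0:ℝ),
          (NormedSpace.exp ((t : ℂ) • A)) i j * (ordLagFun τ 0 t : ℂ))
        = matOrdLagCoef τ 0 A from rfl] at h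
      rw [ordLagFun_zero_eval] at h
      exact_mod_cast h
    have hAS0 : A * matOrdLagCoef τ 0 A
        = (-(Real.sqrt τ) : ℂ) • 1 - ((-(τ/2) : ℝ) : ℂ) • matOrdLagCoef τ 0 A :=
      eq_sub_of_add_eq key0'
    have hXS0 : X * matOrdLagCoef τ 0 A = (-2 * (Real.sqrt τ : ℂ)) • 1 := by
      rw [hXdef, Matrix.sub_mul, smul_mul_assoc, smul_mul_assoc, one_mul, hAS0]
      push_cast
      module
    have h1 : X⁻¹ * (X * matOrdLagCoef τ 0 A) = matOrdLagCoef τ 0 A := by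
      rw [← mul_assoc, Matrix.nonsing_inv_mul X hdetX, one_mul]
    rw [← h1, hXS0, mul_smul_comm, mul_one]
  · -- the recursion
    intro n
    obtain ⟨D1, hD10, hD1⟩ := ordLagFun_decay τ hτ (n + 1)
    obtain ⟨D2, hD20, hD2⟩ := ordLagFun_decay τ hτ n
    set φ : ℝ → ℝ := fun t => ordLagFun τ (n+1) t - ordLagFun τ n t with hφdef
    set φd : ℝ → ℝ := fun t => -(τ/2) * (ordLagFun τ (n+1) t + ordLagFun τ n t) with hφddef
    have hderφ : ∀ t, HasDerivAt φ (φd t) t := by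
      intro t
      have h := (hasDerivAt_ordLagFun τ (n+1) t).sub (hasDerivAt_ordLagFun τ n t)
      rw [lagFunD_succ_sub τ n t] at h
      exact h
    have hφc : Continuous φ := (continuous_ordLagFun τ (n+1)).sub (continuous_ordLagFun τ n)
    have hφdc : Continuous φd := continuous_const.mul
      ((continuous_ordLagFun τ (n+1)).add (continuous_ordLagFun τ n))
    have hboundφ : ∀ t ≥ 0, |φ t| ≤ (D1 + D2) * Real.exp (-(τ/4) * t) := by
      intro t ht
      have h1 := hD1 t ht
      have h2 := hD2 t ht
      have := abs_sub (ordLagFun τ (n+1) t) (ordLagFun τ n t)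
      calc |φ t| ≤ |ordLagFun τ (n+1) t| + |ordLagFun τ n t| := by
            rw [hφdef]
            exact (abs_sub _ _)
        _ ≤ (D1 + D2) * Real.exp (-(τ/4) * t) := by rw [add_mul]; exact add_le_add h1 h2
    have hboundφd : ∀ t ≥ 0, |φd t| ≤ ((τ/2) * (D1 + D2)) * Real.exp (-(τ/4) * t) := by
      intro t ht
      have h1 := hD1 t ht
      have h2 := hD2 t ht
      rw [hφddef]
      dsimp only
      rw [abs_mul, abs_neg, abs_of_pos (by positivity : (0:ℝ) < τ/2)]
      calc (τ/2) * |ordLagFun τ (n+1) t + ordLagFun τ n t|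
          ≤ (τ/2) * ((D1 + D2) * Real.exp (-(τ/4) * t)) := by
            apply mul_le_mul_of_nonneg_left _ (by positivity)
            calc |ordLagFun τ (n+1) t + ordLagFun τ n t|
                ≤ |ordLagFun τ (n+1) t| + |ordLagFun τ n t| := abs_add_le _ _
              _ ≤ (D1 + D2) * Real.exp (-(τ/4) * t) := by
                  rw [add_mul]; exact add_le_add h1 h2
        _ = ((τ/2) * (D1 + D2)) * Real.exp (-(τ/4) * t) := by ring
    have keyn := key_matrix_eq A C hC0 hC τ hτ φ φd hderφ hφc hφdc
      (D1 + D2) hboundφ ((τ/2) * (D1 + D2)) hboundφd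
    -- identify the two matrices
    have hofφ : (Matrix.of fun i j =>
        ∫ t in Set.Ioi (0:ℝ), (NormedSpace.exp ((t : ℂ) • A)) i j * (φ t : ℂ))
        = matOrdLagCoef τ (n+1) A - matOrdLagCoef τ n A := by
      ext i j
      simp only [Matrix.of_apply, matOrdLagCoef, Matrix.sub_apply]
      rw [← integral_sub (hIntLag (n+1) i j) (hIntLag n i j)]
      apply integral_congr_ae
      refine ae_of_all _ fun t => ?_
      simp only [hφdef]
      push_cast
      ring
    have hofφd : (Matrix.of fun i j =>
        ∫ t in Set.Ioi (0:ℝ), (NormedSpace.exp ((t : ℂ) • A)) i j * (φd t : ℂ))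
        = ((-(τ/2) : ℝ) : ℂ) • (matOrdLagCoef τ (n+1) A + matOrdLagCoef τ n A) := by
      ext i j
      simp only [Matrix.of_apply, matOrdLagCoef, Matrix.smul_apply, Matrix.add_apply,
        smul_eq_mul]
      rw [← integral_add (hIntLag (n+1) i j) (hIntLag n i j), ← integral_const_mul]
      apply integral_congr_ae
      refine ae_of_all _ fun t => ?_
      simp only [hφddef]
      push_cast
      ring
    have hφ0 : φ 0 = 0 := by
      simp only [hφdef]
      rw [ordLagFun_zero_eval, ordLagFun_zero_eval, sub_self]
    rw [hofφ, hofφd, hφ0] at keyn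
    rw [show -(((0:ℝ)) : ℂ) • (1 : Matrix (Fin M) (Fin M) ℂ) = 0 by norm_num] at keyn
    -- algebra: X * S₁ = Y * S₀
    set S1 := matOrdLagCoef τ (n+1) A
    set S0 := matOrdLagCoef τ n A
    have hXY : X * S1 - Y * S0
        = (2 : ℂ) • (A * (S1 - S0) + ((-(τ/2) : ℝ) : ℂ) • (S1 + S0)) := by
      rw [hXdef, hYdef, Matrix.sub_mul, Matrix.add_mul, smul_mul_assoc, smul_mul_assoc,
        smul_mul_assoc, smul_mul_assoc, one_mul, one_mul, Matrix.mul_sub]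
      push_cast
      module
    rw [keyn, smul_zero] at hXY
    have hXS1 : X * S1 = Y * S0 := sub_eq_zero.mp hXY
    -- commute Y with X⁻¹
    have hcommXY : X * Y = Y * X := by
      have cA : Commute ((2:ℂ) • A) Y := by
        rw [hYdef]
        exact (((Commute.refl A).smul_right (2:ℂ)).add_right
          (((Commute.one_right A).smul_right (τ:ℂ)))).smul_left (2:ℂ)
      have c1 : Commute ((τ:ℂ) • (1 : Matrix (Fin M) (Fin M) ℂ)) Y := by
        rw [hYdef]
        exact ((((Commute.one_left A).smul_left (τ:ℂ)).smul_right (2:ℂ)).add_right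
          (((Commute.refl (1 : Matrix (Fin M) (Fin M) ℂ)).smul_left (τ:ℂ)).smul_right (τ:ℂ)))
      exact ((cA.sub_left c1)).eq
    have hinvcomm : X⁻¹ * Y = Y * X⁻¹ := by
      have h1 : Y * X * X⁻¹ = Y := by
        rw [mul_assoc, Matrix.mul_nonsing_inv X hdetX, mul_one]
      calc X⁻¹ * Y = X⁻¹ * (Y * X * X⁻¹) := by rw [h1]
        _ = X⁻¹ * (X * Y * X⁻¹) := by rw [← hcommXY]
        _ = X⁻¹ * (X * (Y * X⁻¹)) := by rw [mul_assoc X Y X⁻¹]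
        _ = (X⁻¹ * X) * (Y * X⁻¹) := by rw [mul_assoc]
        _ = Y * X⁻¹ := by rw [Matrix.nonsing_inv_mul X hdetX, one_mul]
    have h1 : X⁻¹ * (X * S1) = S1 := by
      rw [← mul_assoc, Matrix.nonsing_inv_mul X hdetX, one_mul]
    calc S1 = X⁻¹ * (X * S1) := h1.symm
      _ = X⁻¹ * (Y * S0) := by rw [hXS1]
      _ = (X⁻¹ * Y) * S0 := by rw [mul_assoc]
      _ = Y * X⁻¹ * S0 := by rw [hinvcomm]
end

section
/- Let τ > 0, N ∈ ℕ, and λ ∈ ℂ with Re λ < 0. Then ζ(N,τ,0,λ) = (4τ / (|2λ−τ|² − |2λ+τ|²)) · |(2λ+τ)/(2λ−τ)|^{2N+2}. (Note that |2λ−τ|² − |2λ+τ|² = −8τ·Re λ > 0.) -/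
open MeasureTheory Set Filter

/-- `ζ(N,τ,0,λ)`: the squared `L²[0,∞)` error of the `N`-truncated Laguerre expansion
of `t ↦ e^{λt}` for order of generalization `α = 0`. -/
noncomputable def ordLagZeta (N : ℕ) (τ : ℝ) (z : ℂ) : ℝ :=
  ∫ t in Set.Ioi (0 : ℝ),
    ‖Complex.exp (z * t) -
        ∑ n ∈ Finset.range (N + 1), ordLagCoef τ n z * (ordLagFun τ n t : ℂ)‖ ^ 2



-- real integrability
lemma intOn_pow_exp {b : ℝ} (hb : 0 < b) (k : ℕ) :
    IntegrableOn (fun t : ℝ => t ^ k * Real.exp (-b * t)) (Ioi 0) := by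
  apply integrable_of_isBigO_exp_neg (half_pos hb)
  · exact (continuous_pow k).continuousOn.mul (Real.continuous_exp.comp (by continuity)).continuousOn
  · have h := tendsto_rpow_mul_exp_neg_mul_atTop_nhds_zero (k : ℝ) (b/2) (half_pos hb)
    have h2 : Tendsto (fun t : ℝ => t ^ k * Real.exp (-(b/2) * t)) atTop (nhds 0) := by
      apply h.congr'
      filter_upwards [eventually_gt_atTop (0:ℝ)] with t ht
      rw [Real.rpow_natCast]
    have := h2.isBigO_one (F := ℝ)
    calc (fun t : ℝ => t ^ k * Real.exp (-b * t))
        = fun t : ℝ => (t ^ k * Real.exp (-(b/2) * t)) * Real.exp (-(b/2) * t) := by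
          funext t; rw [mul_assoc, ← Real.exp_add]; ring_nf
      _ =O[atTop] fun t : ℝ => 1 * Real.exp (-(b/2) * t) := this.mul (Asymptotics.isBigO_refl _ _)
      _ = fun t : ℝ => Real.exp (-(b/2) * t) := by funext t; rw [one_mul]




lemma norm_cexp_pow {c : ℂ} (k : ℕ) {t : ℝ} (ht : 0 < t) :
    ‖Complex.exp (c * t) * (t : ℂ) ^ k‖ = t ^ k * Real.exp (-(-c.re) * t) := by
  rw [norm_mul, Complex.norm_exp, norm_pow, Complex.norm_real,
    Real.norm_of_nonneg ht.le, neg_neg]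
  simp [Complex.mul_re, mul_comm]

lemma intOn_cexp_pow {c : ℂ} (hc : c.re < 0) (k : ℕ) :
    IntegrableOn (fun t : ℝ => Complex.exp (c * t) * (t : ℂ) ^ k) (Ioi 0) := by
  have hb : 0 < -c.re := by linarith
  refine Integrable.mono' (intOn_pow_exp hb k) ?_ ?_
  · apply Continuous.aestronglyMeasurable
    exact (Complex.continuous_exp.comp (by continuity)).mul (by continuity)
  · filter_upwards [ae_restrict_mem measurableSet_Ioi] with t ht
    rw [norm_cexp_pow k ht]

lemma tendsto_cexp_mul_pow {c : ℂ} (hc : c.re < 0) (k : ℕ) :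
    Tendsto (fun t : ℝ => Complex.exp (c * t) * (t : ℂ) ^ k) atTop (nhds 0) := by
  rw [tendsto_zero_iff_norm_tendsto_zero]
  have hb : 0 < -c.re := by linarith
  have h := tendsto_rpow_mul_exp_neg_mul_atTop_nhds_zero (k : ℝ) (-c.re) hb
  apply h.congr'
  filter_upwards [eventually_gt_atTop (0:ℝ)] with t ht
  rw [Real.rpow_natCast, norm_cexp_pow k ht]

lemma hasDerivAt_cexp_mul (c : ℂ) (x : ℝ) :
    HasDerivAt (fun t : ℝ => Complex.exp (c * t)) (c * Complex.exp (c * x)) x := by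
  have h0 : HasDerivAt (fun t : ℝ => c * (t : ℂ)) c x := by
    simpa using (Complex.ofRealCLM.hasDerivAt (x := x)).const_mul c
  simpa [mul_comm] using h0.cexp

lemma integral_cexp_pow {c : ℂ} (hc : c.re < 0) (k : ℕ) :
    ∫ t in Ioi (0:ℝ), Complex.exp (c * t) * (t : ℂ) ^ k = k.factorial / (-c) ^ (k + 1) := by
  have hc0 : c ≠ 0 := fun h => by simp [h] at hc
  induction k with
  | zero =>
    have key := integral_Ioi_of_hasDerivAt_of_tendsto' (a := 0) (m := 0)
      (f := fun t : ℝ => Complex.exp (c * t) / c)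
      (f' := fun t : ℝ => Complex.exp (c * t))
      (fun x hx => by simpa [mul_div_assoc, mul_div_cancel_left₀ _ hc0]
        using (hasDerivAt_cexp_mul c x).div_const c)
      ((intOn_cexp_pow hc 0).congr_fun (fun t ht => by simp) measurableSet_Ioi)
      ?_
    · simp only [Complex.ofReal_zero, mul_zero, Complex.exp_zero] at key
      calc ∫ t in Ioi (0:ℝ), Complex.exp (c * t) * (t:ℂ)^0
          = ∫ t in Ioi (0:ℝ), Complex.exp (c * t) := by simp
        _ = 0 - 1 / c := key
        _ = (Nat.factorial 0 : ℂ) / (-c) ^ (0+1) := by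
            simp [Nat.factorial]
    · have := (tendsto_cexp_mul_pow hc 0).div_const c
      simpa using this
  | succ k ih =>
    have key := integral_Ioi_of_hasDerivAt_of_tendsto' (a := 0) (m := 0)
      (f := fun t : ℝ => Complex.exp (c * t) * (t : ℂ) ^ (k+1))
      (f' := fun t : ℝ => c * (Complex.exp (c * t) * (t:ℂ) ^ (k+1))
          + (k+1) * (Complex.exp (c * t) * (t:ℂ) ^ k))
      (fun x hx => ?_) ?_ ?_
    · -- key : ∫ f' = 0 - 0
      rw [integral_add ((intOn_cexp_pow hc (k+1)).const_mul c)
          ((intOn_cexp_pow hc k).const_mul _), integral_const_mul, integral_const_mul, ih] at key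
      simp only [Complex.ofReal_zero, mul_zero, Complex.exp_zero, ne_eq] at key
      have h2 : c * ∫ t in Ioi (0:ℝ), Complex.exp (c * t) * (t:ℂ)^(k+1)
          = -((k+1) * ((k.factorial : ℂ) / (-c) ^ (k+1))) := by
        rw [eq_neg_iff_add_eq_zero]
        convert key using 2 <;> simp
      have hck : (-c) ^ (k+1) ≠ 0 := pow_ne_zero _ (neg_ne_zero.mpr hc0)
      field_simp at h2
      rw [pow_succ, eq_div_iff (mul_ne_zero hck (neg_ne_zero.mpr hc0))]
      push_cast [Nat.factorial_succ]
      linear_combination (-1 : ℂ) * h2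
    · have h1 := (hasDerivAt_cexp_mul c x).mul ((hasDerivAt_pow (k+1) (x:ℂ)).comp_ofReal)
      refine HasDerivAt.congr_deriv h1 ?_
      push_cast [Nat.add_sub_cancel]
      ring
    · exact ((intOn_cexp_pow hc (k+1)).const_mul c).add ((intOn_cexp_pow hc k).const_mul _)
    · simpa using tendsto_cexp_mul_pow hc (k+1)




lemma integral_pow_exp {b : ℝ} (hb : 0 < b) (k : ℕ) :
    ∫ t in Ioi (0:ℝ), t ^ k * Real.exp (-b * t) = k.factorial / b ^ (k + 1) := by
  have hc : (-(b:ℂ)).re < 0 := by simpa using hb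
  have h := integral_cexp_pow hc k
  have h2 : ∫ t in Ioi (0:ℝ), ((t ^ k * Real.exp (-b * t) : ℝ) : ℂ)
      = ((∫ t in Ioi (0:ℝ), t ^ k * Real.exp (-b * t) : ℝ) : ℂ) := integral_ofReal
  rw [← Complex.ofReal_inj.mpr rfl] at h2
  have h3 : ∫ t in Ioi (0:ℝ), ((t ^ k * Real.exp (-b * t) : ℝ) : ℂ)
      = ∫ t in Ioi (0:ℝ), Complex.exp (-(b:ℂ) * t) * (t:ℂ) ^ k := by
    apply setIntegral_congr_fun measurableSet_Ioi
    intro t ht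
    simp only [Complex.ofReal_mul, Complex.ofReal_exp, Complex.ofReal_pow, mul_comm]
    congr 2
    push_cast
    ring
  have := h3.symm.trans h2
  rw [h] at this
  have : ((∫ t in Ioi (0:ℝ), t ^ k * Real.exp (-b * t) : ℝ) : ℂ) = (k.factorial : ℂ) / (b:ℂ) ^ (k+1) := by
    rw [← this]; norm_num
  exact_mod_cast this



section Comb
open Finset

private def SS (n j : ℕ) : ℝ := ∑ k ∈ range (n+1), (-1:ℝ)^k * (n.choose k) * ((j+k).choose k)
private def UU (n j : ℕ) : ℝ := ∑ i ∈ range (n+1), (-1:ℝ)^i * (n.choose i) * ((j+1+i).choose (i+1))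

private lemma hockey (n j : ℕ) : ∑ r ∈ range j, (r.choose n) = j.choose (n+1) := by
  induction j with
  | zero => simp
  | succ j ih => rw [sum_range_succ, ih, add_comm, Nat.choose_succ_succ' j n]

private lemma UU_eq (n j : ℕ) : UU n j = ∑ r ∈ range (j+1), SS n r := by
  induction j with
  | zero =>
    simp only [UU, SS, range_one, sum_singleton, zero_add]
    apply sum_congr rfl
    intro i _
    simp [add_comm 1 i]
  | succ j ih =>
    rw [sum_range_succ, ← ih]
    unfold UU SS
    rw [← sum_add_distrib]
    apply sum_congr rfl
    intro i _
    have : j + 1 + 1 + i = (j + 1 + i) + 1 := by ring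
    rw [this, Nat.choose_succ_succ' (j+1+i) i]
    push_cast
    ring

private lemma SS_succ (n j : ℕ) : SS (n+1) j = SS n j - UU n j := by
  have h : SS (n+1) j = ∑ i ∈ range (n+1),
      ((-1:ℝ)^(i+1) * (n.choose (i+1)) * ((j+(i+1)).choose (i+1))
        + (-1:ℝ)^(i+1) * (n.choose i) * ((j+(i+1)).choose (i+1))) + 1 := by
    rw [SS, sum_range_succ']
    congr 1
    · apply sum_congr rfl
      intro i _
      rw [Nat.choose_succ_succ n i]
      push_cast
      ring
    · norm_num
  rw [h, sum_add_distrib]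
  have h1 : ∑ i ∈ range (n+1), (-1:ℝ)^(i+1) * (n.choose (i+1)) * ((j+(i+1)).choose (i+1))
      = SS n j - 1 := by
    have h2 : SS n j = ∑ i ∈ range n, (-1:ℝ)^(i+1) * (n.choose (i+1)) * ((j+(i+1)).choose (i+1)) + 1 := by
      rw [SS, sum_range_succ']
      simp
    rw [sum_range_succ, h2]
    simp
  have h2 : ∑ i ∈ range (n+1), (-1:ℝ)^(i+1) * (n.choose i) * ((j+(i+1)).choose (i+1)) = - UU n j := by
    rw [UU, ← sum_neg_distrib]
    apply sum_congr rfl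
    intro i _
    have : j + (i+1) = j + 1 + i := by ring
    rw [this]
    push_cast
    ring
  rw [h1, h2]
  ring

private lemma keyId_SS (n j : ℕ) : SS n j = (-1:ℝ)^n * (j.choose n) := by
  induction n generalizing j with
  | zero => simp [SS]
  | succ n ih =>
    rw [SS_succ, UU_eq, sum_range_succ]
    have : ∑ r ∈ range j, SS n r = (-1:ℝ)^n * (j.choose (n+1)) := by
      rw [← hockey n j]
      push_cast
      rw [mul_sum]
      exact sum_congr rfl fun r _ => ih r
    rw [this, ih j]
    ring

private lemma keyId2 (n m : ℕ) :
    ∑ j ∈ range (m+1), (-1:ℝ)^j * (m.choose j) * (j.choose n)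
      = if n = m then (-1:ℝ)^n else 0 := by
  rcases le_or_gt n m with hnm | hnm
  · have halt : ∑ i ∈ range (m - n + 1), (-1:ℝ)^i * ((m-n).choose i)
        = if m - n = 0 then 1 else 0 := by
      have := Int.alternating_sum_range_choose (n := m - n)
      have := congrArg (fun x : ℤ => (x : ℝ)) this
      push_cast at this
      rw [this]
    rw [range_eq_Ico, ← sum_Ico_consecutive _ (Nat.zero_le n) (by omega : n ≤ m + 1)]
    have hzero : ∑ j ∈ Ico 0 n, (-1:ℝ)^j * (m.choose j) * (j.choose n) = 0 := by
      apply sum_eq_zero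
      intro j hj
      simp only [Finset.mem_Ico] at hj
      rw [Nat.choose_eq_zero_of_lt hj.2]
      simp
    rw [hzero, zero_add, sum_Ico_eq_sum_range]
    have hrw : ∀ i ∈ range (m + 1 - n), (-1:ℝ)^(n+i) * (m.choose (n+i)) * ((n+i).choose n)
        = ((-1:ℝ)^n * (m.choose n)) * ((-1:ℝ)^i * ((m-n).choose i)) := by
      intro i hi
      simp only [Finset.mem_range] at hi
      have hin : n + i ≤ m := by omega
      have hmul : (m.choose (n+i)) * ((n+i).choose n) = m.choose n * (m-n).choose i := by
        have := Nat.choose_mul (n := m) (Nat.le_add_right n i)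
        simpa using this
      have : ((m.choose (n+i)) : ℝ) * ((n+i).choose n) = (m.choose n : ℝ) * ((m-n).choose i) := by
        exact_mod_cast congrArg (fun x : ℕ => (x : ℝ)) hmul
      rw [pow_add]
      linear_combination ((-1:ℝ)^n * (-1)^i) * this
    rw [sum_congr rfl hrw, ← mul_sum]
    have : m + 1 - n = m - n + 1 := by omega
    rw [this, halt]
    rcases eq_or_lt_of_le hnm with h | h
    · simp [h, Nat.sub_self]
    · have h1 : m - n ≠ 0 := by omega
      have h2 : ¬ (n = m) := by omega
      simp [h1, h2]
  · have h2 : ¬ (n = m) := by omega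
    rw [if_neg h2]
    apply sum_eq_zero
    intro j hj
    simp only [Finset.mem_range] at hj
    rw [Nat.choose_eq_zero_of_lt (by omega : j < n)]
    simp




lemma keyId (n j : ℕ) :
    (∑ k ∈ Finset.range (n+1), (-1:ℝ)^k * (n.choose k) * ((j+k).choose k))
      = (-1:ℝ)^n * (j.choose n) := keyId_SS n j

end Comb

noncomputable def aco (n k : ℕ) : ℝ :=
  (-1 : ℝ) ^ k * ((n.factorial : ℝ) / ((k.factorial : ℝ) ^ 2 * (n - k).factorial))

lemma ordLagPoly_eq (n : ℕ) (t : ℝ) :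
    ordLagPoly n t = ∑ k ∈ Finset.range (n + 1), aco n k * t ^ k := rfl

lemma aco_eq {n k : ℕ} (hk : k ≤ n) :
    aco n k = (-1 : ℝ) ^ k * (n.choose k : ℝ) / k.factorial := by
  have h := Nat.choose_mul_factorial_mul_factorial hk
  have h' : ((n.choose k : ℝ)) * (k.factorial : ℝ) * ((n-k).factorial : ℝ) = (n.factorial : ℝ) := by
    exact_mod_cast congrArg (fun x : ℕ => (x : ℝ)) h
  have hk0 : (k.factorial : ℝ) ≠ 0 := Nat.cast_ne_zero.mpr k.factorial_ne_zero
  have hnk0 : ((n-k).factorial : ℝ) ≠ 0 := Nat.cast_ne_zero.mpr (n-k).factorial_ne_zero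
  rw [aco]
  field_simp
  linear_combination (-1:ℝ) * h'

-- moment sum
lemma lag_moment (n j : ℕ) :
    ∑ k ∈ Finset.range (n+1), aco n k * ((k+j).factorial : ℝ)
      = (-1:ℝ)^n * (j.factorial : ℝ) * (j.choose n : ℝ) := by
  have h : ∀ k ∈ Finset.range (n+1), aco n k * ((k+j).factorial : ℝ)
      = (j.factorial : ℝ) * ((-1:ℝ)^k * (n.choose k) * ((j+k).choose k)) := by
    intro k hk
    rw [aco_eq (Nat.lt_succ_iff.mp (Finset.mem_range.mp hk))]
    have h2 : ((j+k).choose k : ℝ) * (k.factorial : ℝ) * (j.factorial : ℝ)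
        = ((k+j).factorial : ℝ) := by
      have := Nat.choose_mul_factorial_mul_factorial (Nat.le_add_left k j)
      simp only [Nat.add_sub_cancel] at this
      rw [Nat.add_comm k j]
      exact_mod_cast congrArg (fun x : ℕ => (x : ℝ)) this
    have hk0 : (k.factorial : ℝ) ≠ 0 := Nat.cast_ne_zero.mpr k.factorial_ne_zero
    field_simp
    linear_combination (-(n.choose k : ℝ)) * h2
  rw [Finset.sum_congr rfl h, ← Finset.mul_sum, keyId]
  ring

-- product expansion
lemma lag_prod_expand {τ : ℝ} (hτ : 0 ≤ τ) (n m : ℕ) (t : ℝ) :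
    ordLagFun τ n t * ordLagFun τ m t
      = ∑ k ∈ Finset.range (n+1), ∑ j ∈ Finset.range (m+1),
          (τ * aco n k * aco m j * τ^(k+j)) * (t^(k+j) * Real.exp (-τ*t)) := by
  rw [ordLagFun, ordLagFun, ordLagPoly_eq, ordLagPoly_eq]
  have hs : Real.sqrt τ * Real.sqrt τ = τ := Real.mul_self_sqrt hτ
  have he : Real.exp (-τ*t/2) * Real.exp (-τ*t/2) = Real.exp (-τ*t) := by
    rw [← Real.exp_add]; ring_nf
  calc (Real.sqrt τ * Real.exp (-τ * t / 2) * ∑ k ∈ Finset.range (n + 1), aco n k * (τ * t) ^ k) *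
      (Real.sqrt τ * Real.exp (-τ * t / 2) * ∑ j ∈ Finset.range (m + 1), aco m j * (τ * t) ^ j)
      = (Real.sqrt τ * Real.sqrt τ) * (Real.exp (-τ*t/2) * Real.exp (-τ*t/2)) *
        ((∑ k ∈ Finset.range (n + 1), aco n k * (τ * t) ^ k) *
          (∑ j ∈ Finset.range (m + 1), aco m j * (τ * t) ^ j)) := by ring
    _ = τ * Real.exp (-τ*t) * ∑ k ∈ Finset.range (n + 1), ∑ j ∈ Finset.range (m + 1),
          (aco n k * (τ * t) ^ k) * (aco m j * (τ * t) ^ j) := by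
        rw [hs, he, Finset.sum_mul_sum]
    _ = _ := by
        rw [Finset.mul_sum]
        refine Finset.sum_congr rfl fun k _ => ?_
        rw [Finset.mul_sum]
        refine Finset.sum_congr rfl fun j _ => ?_
        rw [pow_add, pow_add, mul_pow, mul_pow]
        ring

lemma lag_orth {τ : ℝ} (hτ : 0 < τ) (n m : ℕ) :
    ∫ t in Ioi (0:ℝ), ordLagFun τ n t * ordLagFun τ m t
      = if n = m then (1:ℝ) else 0 := by
  rw [setIntegral_congr_fun measurableSet_Ioi
    (fun t _ => lag_prod_expand hτ.le n m t)]
  rw [integral_finset_sum _ (fun k _ => integrable_finset_sum _ (fun j _ =>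
    ((intOn_pow_exp hτ (k+j)).const_mul _)))]
  have : ∀ k ∈ Finset.range (n+1),
      (∫ t in Ioi (0:ℝ), ∑ j ∈ Finset.range (m+1),
        (τ * aco n k * aco m j * τ^(k+j)) * (t^(k+j) * Real.exp (-τ*t)))
      = ∑ j ∈ Finset.range (m+1), aco n k * aco m j * ((k+j).factorial : ℝ) := by
    intro k _
    rw [integral_finset_sum _ (fun j _ => ((intOn_pow_exp hτ (k+j)).const_mul _))]
    apply Finset.sum_congr rfl
    intro j _
    rw [integral_const_mul, integral_pow_exp hτ]
    have hτ0 : τ ≠ 0 := hτ.ne'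
    field_simp
    ring
  rw [Finset.sum_congr rfl this]
  -- now pure combinatorics
  have hswap : ∑ k ∈ Finset.range (n+1), ∑ j ∈ Finset.range (m+1),
      aco n k * aco m j * ((k+j).factorial : ℝ)
      = ∑ j ∈ Finset.range (m+1), aco m j *
          (∑ k ∈ Finset.range (n+1), aco n k * ((k+j).factorial : ℝ)) := by
    rw [Finset.sum_comm]
    apply Finset.sum_congr rfl
    intro j _
    rw [Finset.mul_sum]
    apply Finset.sum_congr rfl
    intro k _
    ring
  rw [hswap]
  have h2 : ∀ j ∈ Finset.range (m+1), aco m j *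
      (∑ k ∈ Finset.range (n+1), aco n k * ((k+j).factorial : ℝ))
      = ((-1:ℝ)^j * (m.choose j) * (j.choose n)) * (-1:ℝ)^n := by
    intro j hj
    rw [lag_moment, aco_eq (Nat.lt_succ_iff.mp (Finset.mem_range.mp hj))]
    have hj0 : (j.factorial : ℝ) ≠ 0 := Nat.cast_ne_zero.mpr j.factorial_ne_zero
    field_simp
  rw [Finset.sum_congr rfl h2, ← Finset.sum_mul, keyId2]
  by_cases h : n = m
  · subst h
    simp [← pow_add, ← two_mul, pow_mul]
  · simp [h]




lemma f_l_expand (τ : ℝ) (z : ℂ) (n : ℕ) (t : ℝ) :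
    Complex.exp (z * t) * (ordLagFun τ n t : ℂ)
      = ∑ k ∈ Finset.range (n+1),
          ((Real.sqrt τ * aco n k * τ^k : ℝ) : ℂ) * (Complex.exp ((z - τ/2) * t) * (t:ℂ)^k) := by
  rw [ordLagFun, ordLagPoly_eq]
  push_cast
  rw [Finset.mul_sum, Finset.mul_sum]
  refine Finset.sum_congr rfl fun k _ => ?_
  have he : Complex.exp (z * t) * Complex.exp (-↑τ * ↑t / 2) = Complex.exp ((z - ↑τ/2) * ↑t) := by
    rw [← Complex.exp_add]
    congr 1
    ring
  rw [mul_pow]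
  linear_combination ((Real.sqrt τ : ℂ) * (aco n k : ℂ) * ((τ:ℂ)^k * (t:ℂ)^k)) * he

lemma coef_eq {τ : ℝ} (hτ : 0 < τ) {z : ℂ} (hz : z.re < 0) (n : ℕ) :
    ordLagCoef τ n z
      = (Real.sqrt τ : ℂ) * ((((τ:ℂ)/2 - z) - τ)^n / ((τ:ℂ)/2 - z)^(n+1)) := by
  have hcre : (z - (τ:ℂ)/2).re < 0 := by
    simp only [Complex.sub_re, Complex.div_ofNat_re, Complex.ofReal_re]
    linarith
  set p : ℂ := (τ:ℂ)/2 - z with hp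
  have hp0 : p ≠ 0 := by
    intro h
    have : p.re = 0 := by rw [h]; simp
    simp only [hp, Complex.sub_re, Complex.div_ofNat_re, Complex.ofReal_re] at this
    linarith
  have hneg : -(z - (τ:ℂ)/2) = p := by rw [hp]; ring
  rw [ordLagCoef, setIntegral_congr_fun measurableSet_Ioi (fun t _ => f_l_expand τ z n t),
    integral_finset_sum _ (fun k _ => (intOn_cexp_pow hcre k).const_mul _)]
  have hterm : ∀ k ∈ Finset.range (n+1),
      (∫ t in Ioi (0:ℝ), ((Real.sqrt τ * aco n k * τ^k : ℝ) : ℂ)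
          * (Complex.exp ((z - τ/2) * t) * (t:ℂ)^k))
      = (Real.sqrt τ : ℂ) * (((-(τ:ℂ))^k * p^(n-k) * (n.choose k : ℂ)) / p^(n+1)) := by
    intro k hk
    have hkn : k ≤ n := Nat.lt_succ_iff.mp (Finset.mem_range.mp hk)
    rw [integral_const_mul, integral_cexp_pow hcre k, hneg]
    have hkf : ((k.factorial : ℂ)) ≠ 0 := Nat.cast_ne_zero.mpr k.factorial_ne_zero
    have hpow : p^(n-k) * p^(k+1) = p^(n+1) := by
      rw [← pow_add]
      congr 1
      omega
    have hacoc : ((aco n k : ℝ) : ℂ) = (-1:ℂ)^k * (n.choose k : ℂ) / (k.factorial : ℂ) := by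
      rw [aco_eq hkn]
      push_cast
      ring
    push_cast [hacoc]
    rw [← hpow]
    field_simp
    ring
  rw [Finset.sum_congr rfl hterm, ← Finset.mul_sum]
  congr 1
  rw [← Finset.sum_div]
  congr 1
  have := add_pow (-(τ:ℂ)) p n
  rw [show -(τ:ℂ) + p = p - τ by ring] at this
  rw [this]




lemma two_z_sub_ne {τ : ℝ} (hτ : 0 < τ) {z : ℂ} (hz : z.re < 0) : (2*z - τ) ≠ 0 := by
  intro h
  rw [sub_eq_zero] at h
  have h2 : (2*z).re = (τ:ℂ).re := by rw [h]
  simp [Complex.mul_re] at h2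
  linarith

lemma coef_abs_sq {τ : ℝ} (hτ : 0 < τ) {z : ℂ} (hz : z.re < 0) (n : ℕ) :
    ‖ordLagCoef τ n z‖ ^ 2
      = 4 * τ * (‖2*z+τ‖^2)^n / (‖2*z-τ‖^2)^(n+1) := by
  have hA0 : (2*z - τ) ≠ 0 := two_z_sub_ne hτ hz
  have h1 : ((τ:ℂ)/2 - z) - τ = -(2*z+τ)/2 := by ring
  have h2 : ((τ:ℂ)/2 - z) = -(2*z-τ)/2 := by ring
  have key : ‖ordLagCoef τ n z‖
      = Real.sqrt τ * ((‖2*z+τ‖/2)^n / (‖2*z-τ‖/2)^(n+1)) := by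
    rw [coef_eq hτ hz n, h1, h2, norm_mul, norm_div, norm_pow, norm_pow, norm_div, norm_div,
      norm_neg, norm_neg, Complex.norm_two, Complex.norm_real,
      Real.norm_of_nonneg (Real.sqrt_nonneg τ)]
  rw [key]
  have hbne : ‖2*z-τ‖ ≠ 0 := by rw [ne_eq, norm_eq_zero]; exact hA0
  rw [mul_pow, Real.sq_sqrt hτ.le]
  field_simp
  ring

theorem ordLagZeta_eq (τ : ℝ) (hτ : 0 < τ) (N : ℕ) (z : ℂ) (hz : z.re < 0) :
    ordLagZeta N τ z =
      4 * τ / (‖2 * z - τ‖ ^ 2 - ‖2 * z + τ‖ ^ 2) *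
        ‖(2 * z + τ) / (2 * z - τ)‖ ^ (2 * N + 2) := by
  have hcre : (z - (τ:ℂ)/2).re < 0 := by
    simp only [Complex.sub_re, Complex.div_ofNat_re, Complex.ofReal_re]; linarith
  have hb2 : 0 < -(2*z.re) := by linarith
  have hIfl : ∀ n, IntegrableOn (fun t : ℝ => Complex.exp (z*t) * (ordLagFun τ n t : ℂ)) (Ioi 0) := by
    intro n
    rw [show (fun t : ℝ => Complex.exp (z*t) * (ordLagFun τ n t : ℂ))
        = fun t : ℝ => ∑ k ∈ Finset.range (n+1), ((Real.sqrt τ * aco n k * τ^k : ℝ) : ℂ)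
          * (Complex.exp ((z - τ/2) * t) * (t:ℂ)^k) from funext (f_l_expand τ z n)]
    exact integrable_finset_sum _ (fun k _ => (intOn_cexp_pow hcre k).const_mul _)
  have hIll : ∀ n m, IntegrableOn (fun t : ℝ => ordLagFun τ n t * ordLagFun τ m t) (Ioi 0) := by
    intro n m
    rw [show (fun t : ℝ => ordLagFun τ n t * ordLagFun τ m t)
        = fun t : ℝ => ∑ k ∈ Finset.range (n+1), ∑ j ∈ Finset.range (m+1),
            (τ * aco n k * aco m j * τ^(k+j)) * (t^(k+j) * Real.exp (-τ*t))
        from funext (lag_prod_expand hτ.le n m)]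
    exact integrable_finset_sum _ (fun k _ => integrable_finset_sum _
      (fun j _ => (intOn_pow_exp hτ (k+j)).const_mul _))
  have hnormf : ∀ t : ℝ, ‖Complex.exp (z * (t:ℝ))‖^2 = t^0 * Real.exp (-(-(2*z.re)) * t) := by
    intro t
    rw [Complex.norm_exp, pow_zero, one_mul, sq, ← Real.exp_add]
    congr 1
    simp [Complex.mul_re]
    ring
  have hIf2 : IntegrableOn (fun t : ℝ => ‖Complex.exp (z*t)‖^2) (Ioi 0) := by
    rw [funext hnormf]
    exact intOn_pow_exp hb2 0
  set g : ℝ → ℂ := fun t => ∑ n ∈ Finset.range (N+1), ordLagCoef τ n z * (ordLagFun τ n t : ℂ)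
    with hg
  have hfg_exp : (fun t : ℝ => Complex.exp (z*t) * (starRingEnd ℂ) (g t))
      = fun t : ℝ => ∑ n ∈ Finset.range (N+1), (starRingEnd ℂ) (ordLagCoef τ n z)
          * (Complex.exp (z*t) * (ordLagFun τ n t : ℂ)) := by
    funext t
    simp only [hg, map_sum, map_mul, Complex.conj_ofReal, Finset.mul_sum]
    exact Finset.sum_congr rfl fun n _ => by ring
  have hIfg : IntegrableOn (fun t : ℝ => Complex.exp (z*t) * (starRingEnd ℂ) (g t)) (Ioi 0) := by
    rw [hfg_exp]
    exact integrable_finset_sum _ (fun n _ => (hIfl n).const_mul _)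
  have hgg_exp : (fun t : ℝ => (g t * (starRingEnd ℂ) (g t)).re)
      = fun t : ℝ => ∑ n ∈ Finset.range (N+1), ∑ m ∈ Finset.range (N+1),
          (ordLagCoef τ n z * (starRingEnd ℂ) (ordLagCoef τ m z)).re
            * (ordLagFun τ n t * ordLagFun τ m t) := by
    funext t
    simp only [hg, map_sum, map_mul, Complex.conj_ofReal, Finset.sum_mul_sum]
    rw [Complex.re_sum]
    refine Finset.sum_congr rfl fun n _ => ?_
    rw [Complex.re_sum]
    refine Finset.sum_congr rfl fun m _ => ?_
    have h1 : (ordLagCoef τ n z * (ordLagFun τ n t : ℂ))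
          * ((starRingEnd ℂ) (ordLagCoef τ m z) * (ordLagFun τ m t : ℂ))
        = (ordLagCoef τ n z * (starRingEnd ℂ) (ordLagCoef τ m z))
            * ((ordLagFun τ n t * ordLagFun τ m t : ℝ) : ℂ) := by
      push_cast
      ring
    rw [h1]
    simp [Complex.mul_re]
  have hIgg : IntegrableOn (fun t : ℝ => (g t * (starRingEnd ℂ) (g t)).re) (Ioi 0) := by
    rw [hgg_exp]
    exact integrable_finset_sum _ (fun n _ => integrable_finset_sum _
      (fun m _ => (hIll n m).const_mul _))
  have hIfgre : IntegrableOn (fun t : ℝ => (Complex.exp (z*t) * (starRingEnd ℂ) (g t)).re) (Ioi 0) := by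
    have := hIfg.re
    exact this
  have hptw : ∀ t : ℝ, ‖Complex.exp (z*t) - g t‖^2
      = ‖Complex.exp (z*t)‖^2 - 2 * (Complex.exp (z*t) * (starRingEnd ℂ) (g t)).re
        + (g t * (starRingEnd ℂ) (g t)).re := by
    intro t
    rw [Complex.sq_norm, Complex.sq_norm,
      Complex.normSq_sub, Complex.mul_conj]
    simp only [Complex.ofReal_re]
    ring
  have hsub : IntegrableOn (fun t : ℝ => ‖Complex.exp (z*t)‖^2
      - 2 * (Complex.exp (z*t) * (starRingEnd ℂ) (g t)).re) (Ioi 0) :=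
    hIf2.sub (hIfgre.const_mul 2)
  have hsplit : ordLagZeta N τ z
      = (∫ t in Ioi (0:ℝ), ‖Complex.exp (z*t)‖^2)
        - 2 * (∫ t in Ioi (0:ℝ), (Complex.exp (z*t) * (starRingEnd ℂ) (g t)).re)
        + (∫ t in Ioi (0:ℝ), (g t * (starRingEnd ℂ) (g t)).re) := by
    unfold ordLagZeta
    rw [setIntegral_congr_fun measurableSet_Ioi (fun t _ => hptw t)]
    rw [integral_add hsub hIgg, integral_sub hIf2 (hIfgre.const_mul 2), integral_const_mul]
  have e1 : ∫ t in Ioi (0:ℝ), ‖Complex.exp (z*t)‖^2 = 1/(-(2*z.re)) := by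
    rw [setIntegral_congr_fun measurableSet_Ioi (fun t _ => hnormf t), integral_pow_exp hb2 0]
    simp [Nat.factorial]
  have e2 : ∫ t in Ioi (0:ℝ), (Complex.exp (z*t) * (starRingEnd ℂ) (g t)).re
      = ∑ n ∈ Finset.range (N+1), ‖ordLagCoef τ n z‖^2 := by
    have hre := integral_re (μ := volume.restrict (Ioi (0:ℝ))) hIfg
    simp only [RCLike.re_to_complex] at hre
    rw [hre]
    rw [hfg_exp, integral_finset_sum _ (fun n _ => (hIfl n).const_mul _)]
    have h3 : ∀ n ∈ Finset.range (N+1),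
        (∫ t in Ioi (0:ℝ), (starRingEnd ℂ) (ordLagCoef τ n z)
            * (Complex.exp (z*t) * (ordLagFun τ n t : ℂ)))
        = (starRingEnd ℂ) (ordLagCoef τ n z) * ordLagCoef τ n z := by
      intro n _
      rw [integral_const_mul]
      rfl
    rw [Finset.sum_congr rfl h3, Complex.re_sum]
    refine Finset.sum_congr rfl fun n _ => ?_
    rw [mul_comm, Complex.mul_conj]
    simp [Complex.sq_norm]
  have e3 : ∫ t in Ioi (0:ℝ), (g t * (starRingEnd ℂ) (g t)).re
      = ∑ n ∈ Finset.range (N+1), ‖ordLagCoef τ n z‖^2 := by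
    rw [hgg_exp]
    rw [integral_finset_sum _ (fun n _ => integrable_finset_sum _
      (fun m _ => (hIll n m).const_mul _))]
    have h4 : ∀ n ∈ Finset.range (N+1),
        (∫ t in Ioi (0:ℝ), ∑ m ∈ Finset.range (N+1),
          (ordLagCoef τ n z * (starRingEnd ℂ) (ordLagCoef τ m z)).re
            * (ordLagFun τ n t * ordLagFun τ m t))
        = (ordLagCoef τ n z * (starRingEnd ℂ) (ordLagCoef τ n z)).re := by
      intro n hn
      rw [integral_finset_sum _ (fun m _ => (hIll n m).const_mul _)]
      have h5 : ∀ m ∈ Finset.range (N+1),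
          (∫ t in Ioi (0:ℝ), (ordLagCoef τ n z * (starRingEnd ℂ) (ordLagCoef τ m z)).re
              * (ordLagFun τ n t * ordLagFun τ m t))
          = if n = m then (ordLagCoef τ n z * (starRingEnd ℂ) (ordLagCoef τ m z)).re else 0 := by
        intro m _
        rw [integral_const_mul, lag_orth hτ n m]
        by_cases h : n = m <;> simp [h]
      rw [Finset.sum_congr rfl h5, Finset.sum_ite_eq (Finset.range (N+1)) n
        (fun m => (ordLagCoef τ n z * (starRingEnd ℂ) (ordLagCoef τ m z)).re), if_pos hn]
    rw [Finset.sum_congr rfl h4]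
    refine Finset.sum_congr rfl fun n _ => ?_
    rw [Complex.mul_conj]
    simp [Complex.sq_norm]
  rw [hsplit, e1, e2, e3]
  rw [Finset.sum_congr rfl (fun n (_ : n ∈ Finset.range (N+1)) => coef_abs_sq hτ hz n)]
  set A := ‖2*z-(τ:ℂ)‖^2 with hA
  set B := ‖2*z+(τ:ℂ)‖^2 with hB
  have hAB : A - B = -(8*τ*z.re) := by
    rw [hA, hB, Complex.sq_norm, Complex.sq_norm, Complex.normSq_apply, Complex.normSq_apply]
    simp only [Complex.sub_re, Complex.add_re, Complex.sub_im, Complex.add_im,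
      Complex.mul_re, Complex.mul_im, Complex.ofReal_re, Complex.ofReal_im,
      Complex.re_ofNat, Complex.im_ofNat]
    ring
  have hA0 : 0 < A := by
    rw [hA]
    have h0 := norm_pos_iff.mpr (two_z_sub_ne hτ hz)
    positivity
  have hB0 : 0 ≤ B := by rw [hB]; positivity
  have hBA : B < A := by nlinarith
  have hq1 : B/A ≠ 1 := by
    intro h
    rw [div_eq_one_iff_eq hA0.ne'] at h
    linarith
  have hsum : ∑ n ∈ Finset.range (N+1), 4*τ*B^n/A^(n+1)
      = 4*τ/A * (((B/A)^(N+1) - 1)/(B/A - 1)) := by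
    rw [← geom_sum_eq hq1 (N+1), Finset.mul_sum]
    refine Finset.sum_congr rfl fun n _ => ?_
    rw [div_pow, div_mul_div_comm, ← pow_succ']
  rw [hsum]
  have htgt : ‖(2*z+(τ:ℂ))/(2*z-(τ:ℂ))‖ ^ (2*N+2) = (B/A)^(N+1) := by
    rw [show 2*N+2 = 2*(N+1) from by ring, pow_mul]
    congr 1
    rw [norm_div, div_pow, hA, hB]
  rw [htgt]
  have hx : z.re ≠ 0 := ne_of_lt hz
  have hBA1 : B/A - 1 = (B-A)/A := by field_simp
  have key2 : 4*τ/A * (((B/A)^(N+1) - 1)/(B/A - 1)) = ((B/A)^(N+1) - 1)/(2*z.re) := by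
    rw [hBA1]
    have hBA2 : B - A = 8*τ*z.re := by linarith
    rw [hBA2]
    field_simp
    ring
  have key3 : 4*τ/(A-B) = -(1/(2*z.re)) := by
    rw [hAB]
    field_simp
    ring
  rw [key2, key3]
  ring
end
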